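/- arXiv:1809.01503 — 3 statements merged into one kernel-verified Lean document; each statement's English description precedes it below -/
import Mathlib

section
/- Let X₁, ..., X_{N_S} be i.i.d. Gamma(τ, λ) random variables with integer shape τ. Then the PDF of max_i X_i equals (N_S λ^τ / Γ(τ)) · Σ over tuples (n_1,...,n_{τ+1}) of nonnegative integers summing to N_S − 1 of A · x^{B + τ − 1} e^{−λ(C+1)x}, where A = multinomial(N_S−1; n_1,...,n_{τ+1}) · Π_{p=2}^{τ+1} (−λ^{p−2}/(p−2)!)^{n_p}, B = Σ_{p=2}^{τ+1} n_p (p−2), and C = Σ_{p=2}^{τ+1} n_p. -/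
open MeasureTheory ProbabilityTheory Real Finset

namespace Stmt7Aux

noncomputable def Fs (lam : ℝ) (t : ℕ) (x : ℝ) : ℝ :=
  1 - Real.exp (-(lam * x)) * ∑ k ∈ Finset.range (t + 1), (lam * x) ^ k / k.factorial

noncomputable def pf (lam : ℝ) (t : ℕ) (x : ℝ) : ℝ :=
  lam ^ (t + 1) / t.factorial * x ^ t * Real.exp (-(lam * x))

lemma tele (lam x : ℝ) (t : ℕ) :
    ∑ k ∈ Finset.range (t + 1),
      (lam * ((lam * x) ^ k / k.factorial) - ((k : ℝ) * (lam * x) ^ (k - 1) * lam) / k.factorial)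
      = lam * (lam * x) ^ t / t.factorial := by
  induction t with
  | zero => simp
  | succ t ih =>
      rw [Finset.sum_range_succ, ih]
      have h1 : (((t+1).factorial : ℕ) : ℝ) = ((t:ℝ)+1) * t.factorial := by
        push_cast [Nat.factorial_succ]; ring
      have h2 : ((t.factorial : ℕ) : ℝ) ≠ 0 := Nat.cast_ne_zero.mpr t.factorial_ne_zero
      have h3 : ((t:ℝ)+1) ≠ 0 := by positivity
      push_cast
      rw [h1]
      field_simp [h1]
      ring

lemma hasDerivAt_Fs (lam : ℝ) (t : ℕ) (x : ℝ) :
    HasDerivAt (Fs lam t) (pf lam t x) x := by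
  have hE : HasDerivAt (fun y : ℝ => Real.exp (-(lam * y))) (-lam * Real.exp (-(lam * x))) x := by
    have h1 : HasDerivAt (fun y : ℝ => -(lam * y)) (-lam) x := by
      simpa [Pi.neg_def] using ((hasDerivAt_id x).const_mul lam).neg
    simpa [mul_comm, Function.comp_def] using (Real.hasDerivAt_exp (-(lam * x))).comp x h1
  have hS : HasDerivAt (fun y : ℝ => ∑ k ∈ Finset.range (t+1), (lam * y) ^ k / k.factorial)
      (∑ k ∈ Finset.range (t+1), ((k : ℝ) * (lam * x) ^ (k - 1) * lam) / k.factorial) x := by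
    apply HasDerivAt.fun_sum
    intro k _
    have h1 : HasDerivAt (fun y : ℝ => lam * y) lam x := by
      simpa using (hasDerivAt_id x).const_mul lam
    exact (h1.pow k).div_const _
  have hFs : HasDerivAt (Fs lam t)
      (-((-lam * Real.exp (-(lam * x))) *
          (∑ k ∈ Finset.range (t+1), (lam * x) ^ k / k.factorial)
        + Real.exp (-(lam * x)) *
          ∑ k ∈ Finset.range (t+1), ((k : ℝ) * (lam * x) ^ (k-1) * lam) / k.factorial)) x :=
    (hE.mul hS).const_sub 1
  have hsum : lam * (∑ k ∈ Finset.range (t+1), (lam*x)^k / k.factorial)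
      - ∑ k ∈ Finset.range (t+1), ((k : ℝ) * (lam*x)^(k-1) * lam) / k.factorial
      = lam * (lam*x)^t / t.factorial := by
    rw [Finset.mul_sum, ← Finset.sum_sub_distrib]
    exact tele lam x t
  convert hFs using 1
  have hpf : pf lam t x = Real.exp (-(lam*x)) * (lam * (lam*x)^t / t.factorial) := by
    unfold pf; rw [mul_pow]; ring
  rw [hpf, ← hsum]; ring

lemma Fs_zero (lam : ℝ) (t : ℕ) : Fs lam t 0 = 0 := by
  unfold Fs
  rw [Finset.sum_range_succ']
  simp

lemma Fs_nonneg {lam : ℝ} (hlam : 0 < lam) (t : ℕ) {x : ℝ} (hx : 0 ≤ x) :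
    0 ≤ Fs lam t x := by
  unfold Fs
  have h1 : ∑ k ∈ Finset.range (t+1), (lam*x)^k / k.factorial ≤ Real.exp (lam*x) :=
    Real.sum_le_exp_of_nonneg (by positivity) _
  have h2 : Real.exp (-(lam*x)) * (∑ k ∈ Finset.range (t+1), (lam*x)^k / k.factorial)
      ≤ Real.exp (-(lam*x)) * Real.exp (lam*x) :=
    mul_le_mul_of_nonneg_left h1 (Real.exp_nonneg _)
  rw [← Real.exp_add] at h2
  simp only [neg_add_cancel, Real.exp_zero] at h2
  linarith

lemma pf_nonneg {lam : ℝ} (hlam : 0 < lam) (t : ℕ) {x : ℝ} (hx : 0 ≤ x) :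
    0 ≤ pf lam t x := by
  unfold pf; positivity

lemma pf_cont (lam : ℝ) (t : ℕ) : Continuous (pf lam t) := by
  unfold pf; fun_prop

lemma Fs_cont (lam : ℝ) (t : ℕ) : Continuous (Fs lam t) := by
  unfold Fs; fun_prop

lemma cdf_eval {lam : ℝ} (hlam : 0 < lam) (t : ℕ) {x : ℝ} (hx : 0 ≤ x) :
    (volume.withDensity (gammaPDF ((t + 1 : ℕ) : ℝ) lam)) (Set.Iic x)
      = ENNReal.ofReal (Fs lam t x) := by
  rw [withDensity_apply _ measurableSet_Iic,
    lintegral_Iic_eq_lintegral_Iio_add_Icc _ hx, lintegral_gammaPDF_of_nonpos le_rfl, zero_add]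
  have hcong : ∀ y ∈ Set.Icc (0:ℝ) x, gammaPDF ((t+1:ℕ):ℝ) lam y = ENNReal.ofReal (pf lam t y) := by
    intro y hy
    rw [gammaPDF_of_nonneg hy.1]
    congr 1
    have e1 : lam ^ (((t+1:ℕ)):ℝ) = lam ^ (t+1) := by
      rw [Real.rpow_natCast]
    have e2 : y ^ ((((t+1:ℕ)):ℝ) - 1) = y ^ t := by
      rw [show (((t+1:ℕ)):ℝ) - 1 = ((t:ℕ):ℝ) by push_cast; ring, Real.rpow_natCast]
    have e3 : Real.Gamma (((t+1:ℕ)):ℝ) = t.factorial := by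
      rw [show (((t+1:ℕ)):ℝ) = ((t:ℕ):ℝ) + 1 by push_cast; ring, Real.Gamma_nat_eq_factorial]
    rw [e1, e2, e3]
    rfl
  rw [setLIntegral_congr_fun measurableSet_Icc hcong]
  have hint : IntegrableOn (pf lam t) (Set.Icc 0 x) := (pf_cont lam t).integrableOn_Icc
  have hnn : 0 ≤ᵐ[volume.restrict (Set.Icc (0:ℝ) x)] pf lam t := by
    filter_upwards [ae_restrict_mem measurableSet_Icc] with y hy
    exact pf_nonneg hlam t hy.1
  rw [← ofReal_integral_eq_lintegral_ofReal hint hnn]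
  congr 1
  rw [MeasureTheory.integral_Icc_eq_integral_Ioc, ← intervalIntegral.integral_of_le hx,
    intervalIntegral.integral_eq_sub_of_hasDerivAt (fun y _ => hasDerivAt_Fs lam t y)
      ((pf_cont lam t).intervalIntegrable 0 x), Fs_zero, sub_zero]

lemma expand (lam : ℝ) (t m : ℕ) (x : ℝ) :
    (((m+1:ℕ):ℝ) * lam ^ (t+1) / Real.Gamma ((t+1:ℕ):ℝ)) *
      ∑ n ∈ Finset.piAntidiag (Finset.univ : Finset (Fin (t+1+1))) m,
        ((Nat.multinomial Finset.univ n : ℝ) *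
            ∏ p : Fin (t+1), (-(lam ^ (p:ℕ)) / (Nat.factorial p)) ^ n p.succ) *
          x ^ ((∑ p : Fin (t+1), n p.succ * (p:ℕ)) + (t+1) - 1) *
          Real.exp (-(lam * (((∑ p : Fin (t+1), n p.succ : ℕ) : ℝ) + 1) * x))
    = ((m+1:ℕ):ℝ) * pf lam t x * (Fs lam t x) ^ m := by
  have e3 : Real.Gamma (((t+1:ℕ)):ℝ) = t.factorial := by
    rw [show (((t+1:ℕ)):ℝ) = ((t:ℕ):ℝ) + 1 by push_cast; ring, Real.Gamma_nat_eq_factorial]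
  set E := Real.exp (-(lam * x)) with hE
  have hFs : Fs lam t x =
      ∑ j : Fin (t+1+1),
        (Fin.cons 1 (fun p : Fin (t+1) => -((lam*x)^(p:ℕ) / (p:ℕ).factorial * E)) j) := by
    rw [Fin.sum_univ_succ]
    simp only [Fin.cons_zero, Fin.cons_succ]
    rw [Fin.sum_univ_eq_sum_range (fun k => -((lam*x)^k / (k:ℕ).factorial * E)) (t+1)]
    unfold Fs
    rw [sub_eq_add_neg, Finset.mul_sum, ← Finset.sum_neg_distrib]
    exact congrArg (1 + ·) (Finset.sum_congr rfl fun k _ => by rw [← hE]; ring)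
  rw [hFs, Finset.sum_pow_eq_sum_piAntidiag, Finset.mul_sum, Finset.mul_sum]
  apply Finset.sum_congr rfl
  intro n hn
  have hprod : ∏ j : Fin (t+1+1),
      (Fin.cons (1:ℝ) (fun p : Fin (t+1) => -((lam*x)^(p:ℕ)/(p:ℕ).factorial * E)) j) ^ n j
      = (∏ p : Fin (t+1), (-(lam^(p:ℕ))/((p:ℕ).factorial : ℝ)) ^ n p.succ)
        * x ^ (∑ p : Fin (t+1), n p.succ * (p:ℕ)) * E ^ (∑ p : Fin (t+1), n p.succ) := by
    rw [Fin.prod_univ_succ]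
    simp only [Fin.cons_zero, Fin.cons_succ, one_pow, one_mul]
    rw [← Finset.prod_pow_eq_pow_sum Finset.univ (fun p : Fin (t+1) => n p.succ * (p:ℕ)) x,
        ← Finset.prod_pow_eq_pow_sum Finset.univ (fun p : Fin (t+1) => n p.succ) E,
        ← Finset.prod_mul_distrib, ← Finset.prod_mul_distrib]
    apply Finset.prod_congr rfl
    intro p _
    rw [mul_comm (n p.succ) ((p:ℕ)), pow_mul, ← mul_pow, ← mul_pow]
    congr 1
    rw [mul_pow]
    ring
  rw [hprod]
  have hBt : (∑ p : Fin (t+1), n p.succ * (p:ℕ)) + (t+1) - 1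
      = (∑ p : Fin (t+1), n p.succ * (p:ℕ)) + t := by omega
  have hexp : Real.exp (-(lam * (((∑ p : Fin (t+1), n p.succ : ℕ) : ℝ) + 1) * x))
      = E * E ^ (∑ p : Fin (t+1), n p.succ) := by
    rw [hE, ← Real.exp_nat_mul, ← Real.exp_add]
    congr 1
    push_cast
    ring
  rw [hBt, pow_add, hexp, e3]
  unfold pf
  rw [← hE]
  push_cast
  ring


lemma pow_cdf_eval {lam : ℝ} (hlam : 0 < lam) (t m : ℕ) {x : ℝ} (hx : 0 ≤ x) (g : ℝ → ℝ)
    (hg : ∀ y ∈ Set.Icc (0:ℝ) x, g y = ((m+1:ℕ):ℝ) * pf lam t y * (Fs lam t y) ^ m) :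
    ∫⁻ y in Set.Icc (0:ℝ) x, ENNReal.ofReal (g y)
      = ENNReal.ofReal ((Fs lam t x) ^ (m+1)) := by
  have hcong : ∀ y ∈ Set.Icc (0:ℝ) x,
      ENNReal.ofReal (g y)
        = ENNReal.ofReal (((m+1:ℕ):ℝ) * pf lam t y * (Fs lam t y) ^ m) := by
    intro y hy; rw [hg y hy]
  rw [setLIntegral_congr_fun measurableSet_Icc hcong]
  have hDc : Continuous (fun y => ((m+1:ℕ):ℝ) * pf lam t y * (Fs lam t y) ^ m) := by
    have := pf_cont lam t
    have := Fs_cont lam t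
    fun_prop
  have hint : IntegrableOn (fun y => ((m+1:ℕ):ℝ) * pf lam t y * (Fs lam t y) ^ m)
      (Set.Icc 0 x) := hDc.integrableOn_Icc
  have hnn : 0 ≤ᵐ[volume.restrict (Set.Icc (0:ℝ) x)]
      (fun y => ((m+1:ℕ):ℝ) * pf lam t y * (Fs lam t y) ^ m) := by
    filter_upwards [ae_restrict_mem measurableSet_Icc] with y hy
    have h1 := pf_nonneg hlam t hy.1
    have h2 := Fs_nonneg hlam t hy.1
    positivity
  rw [← ofReal_integral_eq_lintegral_ofReal hint hnn]
  congr 1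
  have hderiv : ∀ y ∈ Set.uIcc (0:ℝ) x,
      HasDerivAt (fun z => (Fs lam t z) ^ (m+1))
        (((m+1:ℕ):ℝ) * pf lam t y * (Fs lam t y) ^ m) y := by
    intro y _
    have := (hasDerivAt_Fs lam t y).pow (m+1)
    simpa [Nat.add_sub_cancel, mul_comm, mul_assoc, mul_left_comm, Pi.pow_def] using this
  rw [MeasureTheory.integral_Icc_eq_integral_Ioc, ← intervalIntegral.integral_of_le hx,
    intervalIntegral.integral_eq_sub_of_hasDerivAt hderiv
      (hDc.intervalIntegrable 0 x), Fs_zero]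
  simp

end Stmt7Aux

open Stmt7Aux in
/-- The PDF of the maximum of `N_S` i.i.d. `Gamma(τ, λ)` variables (integer shape `τ`),
expanded via the multinomial theorem (eq. (48) of the paper). The tuple index `p` of the
paper (running from `2` to `τ+1`) corresponds to `n p.succ` with `p : Fin τ` below, and
`n 0` corresponds to the paper's `n_1`. -/
theorem stmt_7 {Ω : Type*} [MeasurableSpace Ω] (μ : Measure Ω) [IsProbabilityMeasure μ]
    (NS : ℕ) (hNS : 0 < NS) (τ : ℕ) (hτ : 0 < τ) (lam : ℝ) (hlam : 0 < lam)
    (X : Fin NS → Ω → ℝ) (hXm : ∀ i, Measurable (X i))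
    (hiid : iIndepFun X μ)
    (hlaw : ∀ i, Measure.map (X i) μ = volume.withDensity (gammaPDF (τ : ℝ) lam)) :
    Measure.map (fun ω => ⨆ i, X i ω) μ =
      volume.withDensity (fun x => ENNReal.ofReal (if 0 ≤ x then
        ((NS : ℝ) * lam ^ τ / Real.Gamma τ) *
          ∑ n ∈ Finset.piAntidiag (Finset.univ : Finset (Fin (τ + 1))) (NS - 1),
            ((Nat.multinomial Finset.univ n : ℝ) *
                ∏ p : Fin τ, (-(lam ^ (p : ℕ)) / (Nat.factorial p)) ^ n p.succ) *
              x ^ ((∑ p : Fin τ, n p.succ * (p : ℕ)) + τ - 1) *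
              Real.exp (-(lam * ((∑ p : Fin τ, n p.succ : ℕ) + 1) * x))
        else 0)) := by
  obtain ⟨m, rfl⟩ : ∃ m, NS = m + 1 := ⟨NS - 1, by omega⟩
  obtain ⟨t, rfl⟩ : ∃ t, τ = t + 1 := ⟨τ - 1, by omega⟩
  simp only [Nat.add_sub_cancel]
  have hmeas : Measurable (fun ω => ⨆ i, X i ω) := Measurable.iSup hXm
  have hfin : IsFiniteMeasure (Measure.map (fun ω => ⨆ i, X i ω) μ) := by
    have : IsProbabilityMeasure (Measure.map (fun ω => ⨆ i, X i ω) μ) :=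
      Measure.isProbabilityMeasure_map hmeas.aemeasurable
    infer_instance
  refine Measure.ext_of_Iic _ _ (fun x => ?_)
  rw [Measure.map_apply hmeas measurableSet_Iic]
  have hset : (fun ω => ⨆ i, X i ω) ⁻¹' Set.Iic x = ⋂ i, X i ⁻¹' Set.Iic x := by
    ext ω
    simp only [Set.mem_preimage, Set.mem_Iic, Set.mem_iInter]
    exact ciSup_le_iff (Set.Finite.bddAbove (Set.finite_range _))
  rw [hset, hiid.meas_iInter (fun i => ⟨Set.Iic x, measurableSet_Iic, rfl⟩)]
  have hcomp : ∀ i, μ (X i ⁻¹' Set.Iic x)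
      = (volume.withDensity (gammaPDF ((t+1:ℕ):ℝ) lam)) (Set.Iic x) := by
    intro i
    rw [← Measure.map_apply (hXm i) measurableSet_Iic, hlaw i]
  rw [Finset.prod_congr rfl (fun i _ => hcomp i), Finset.prod_const, Finset.card_univ,
    Fintype.card_fin]
  by_cases hx : 0 ≤ x
  · rw [cdf_eval hlam t hx, withDensity_apply _ measurableSet_Iic,
      lintegral_Iic_eq_lintegral_Iio_add_Icc _ hx]
    have hIio : (∫⁻ y in Set.Iio (0:ℝ), ENNReal.ofReal (if 0 ≤ y then
        (((m+1:ℕ):ℝ) * lam ^ (t+1) / Real.Gamma ((t+1:ℕ):ℝ)) *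
          ∑ n ∈ Finset.piAntidiag (Finset.univ : Finset (Fin (t+1+1))) m,
            ((Nat.multinomial Finset.univ n : ℝ) *
                ∏ p : Fin (t+1), (-(lam ^ (p : ℕ)) / (Nat.factorial p)) ^ n p.succ) *
              y ^ ((∑ p : Fin (t+1), n p.succ * (p : ℕ)) + (t+1) - 1) *
              Real.exp (-(lam * ((∑ p : Fin (t+1), n p.succ : ℕ) + 1) * y))
        else 0)) = 0 := by
      rw [setLIntegral_congr_fun measurableSet_Iio
        (fun y (hy : y < 0) => by rw [if_neg (not_le.mpr hy)])]
      simp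
    rw [hIio, zero_add]
    rw [pow_cdf_eval hlam t m hx _ (fun y hy => by
      rw [if_pos hy.1]
      exact expand lam t m y)]
    rw [ENNReal.ofReal_pow (Fs_nonneg hlam t hx)]
  · push_neg at hx
    have hIic0 : (volume.withDensity (gammaPDF ((t+1:ℕ):ℝ) lam)) (Set.Iic x) = 0 := by
      refine le_antisymm ?_ (zero_le)
      calc (volume.withDensity (gammaPDF ((t+1:ℕ):ℝ) lam)) (Set.Iic x)
          ≤ (volume.withDensity (gammaPDF ((t+1:ℕ):ℝ) lam)) (Set.Iio 0) :=
            measure_mono (Set.Iic_subset_Iio.mpr hx)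
        _ = 0 := by
            rw [withDensity_apply _ measurableSet_Iio]
            exact lintegral_gammaPDF_of_nonpos le_rfl
    rw [hIic0, zero_pow (Nat.succ_ne_zero m)]
    symm
    rw [withDensity_apply _ measurableSet_Iic]
    rw [setLIntegral_congr_fun measurableSet_Iic
      (fun y (hy : y ≤ x) => by
        rw [if_neg (not_le.mpr (lt_of_le_of_lt hy hx))])]
    simp
end

section
/- Let X₁, ..., X_{N_S} be i.i.d. Gamma(τ, λ) random variables with integer shape τ. Then the PDF of min_i X_i equals (N_S λ^τ / Γ(τ)) · Σ over tuples (n_1,...,n_τ) of nonnegative integers summing to N_S − 1 of A_E · x^{B_E + τ − 1} e^{−λ(C_E+1)x}, where A_E = multinomial(N_S−1; n_1,...,n_τ) · Π_{p=1}^{τ} (λ^{p−1}/(p−1)!)^{n_p}, B_E = Σ_{p=1}^{τ} n_p (p−1), and C_E = Σ_{p=1}^{τ} n_p. -/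
open MeasureTheory ProbabilityTheory Real Finset

noncomputable def Sfun (τ : ℕ) (lam : ℝ) (x : ℝ) : ℝ :=
  ∑ i ∈ Finset.range τ, Real.exp (-(lam * x)) * (lam * x) ^ i / i.factorial

lemma Sfun_hasDerivAt (τ : ℕ) (hτ : 0 < τ) (lam : ℝ) (x : ℝ) :
    HasDerivAt (Sfun τ lam)
      (-(lam ^ τ / (τ - 1).factorial * x ^ (τ - 1) * Real.exp (-(lam * x)))) x := by
  have hexp : HasDerivAt (fun y : ℝ => Real.exp (-(lam * y)))
      (-lam * Real.exp (-(lam * x))) x := by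
    have h1 : HasDerivAt (fun y : ℝ => -(lam * y)) (-lam) x := by
      simpa using (hasDerivAt_id x).const_mul (-lam)
    simpa [mul_comm] using h1.exp
  set E := Real.exp (-(lam * x)) with hE
  have hterm : ∀ i : ℕ, HasDerivAt (fun y => Real.exp (-(lam * y)) * (lam * y) ^ i / i.factorial)
      ((if i = 0 then 0 else lam ^ i / (i - 1).factorial * x ^ (i - 1) * E)
        - lam ^ (i + 1) / i.factorial * x ^ i * E) x := by
    intro i
    have hpow : HasDerivAt (fun y : ℝ => y ^ i) (i * x ^ (i - 1)) x := hasDerivAt_pow i x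
    have h2 : HasDerivAt (fun y => y ^ i * Real.exp (-(lam * y)))
        (i * x ^ (i - 1) * E + x ^ i * (-lam * E)) x := hpow.mul hexp
    have h3 := h2.const_mul (lam ^ i / i.factorial)
    have heq : ∀ y : ℝ, lam ^ i / i.factorial * (y ^ i * Real.exp (-(lam * y)))
        = Real.exp (-(lam * y)) * (lam * y) ^ i / i.factorial := by
      intro y; rw [mul_pow]; ring
    have h4 : HasDerivAt (fun y => Real.exp (-(lam * y)) * (lam * y) ^ i / i.factorial)
        (lam ^ i / i.factorial * (i * x ^ (i - 1) * E + x ^ i * (-lam * E))) x := by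
      refine h3.congr_of_eventuallyEq ?_
      filter_upwards with y using (heq y).symm
    convert h4 using 1
    rcases i with _ | j
    · norm_num
    · rw [if_neg (Nat.succ_ne_zero j)]
      have hfac : ((j + 1).factorial : ℝ) = (j + 1) * j.factorial := by
        push_cast [Nat.factorial_succ]; ring
      have hfacpos : (0:ℝ) < j.factorial := by positivity
      simp only [Nat.succ_sub_one, Nat.cast_succ]
      rw [hfac]
      field_simp
      ring
  have hsum := HasDerivAt.sum (u := Finset.range τ) (fun i _ => hterm i)
  have : (∑ i ∈ Finset.range τ,
      ((if i = 0 then 0 else lam ^ i / (i - 1).factorial * x ^ (i - 1) * E)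
        - lam ^ (i + 1) / i.factorial * x ^ i * E))
      = -(lam ^ τ / (τ - 1).factorial * x ^ (τ - 1) * E) := by
    have := Finset.sum_range_sub' (f := fun i =>
      (if i = 0 then 0 else lam ^ i / (i - 1).factorial * x ^ (i - 1) * E)) τ
    rw [Finset.sum_congr rfl (fun i _ => ?_), this, if_pos rfl, if_neg hτ.ne', zero_sub]
    simp only [if_neg (Nat.succ_ne_zero i), Nat.add_sub_cancel]
  rw [this] at hsum
  exact hsum.congr_of_eventuallyEq (Filter.Eventually.of_forall fun y => by simp [Sfun, Finset.sum_apply])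


lemma gammaPDFReal_eq_nat {τ : ℕ} (hτ : 0 < τ) (lam : ℝ) {x : ℝ} (hx : 0 ≤ x) :
    gammaPDFReal (τ : ℝ) lam x
      = lam ^ τ / (τ - 1).factorial * x ^ (τ - 1) * Real.exp (-(lam * x)) := by
  rw [gammaPDFReal, if_pos hx]
  have h1 : ((τ : ℝ) - 1) = ((τ - 1 : ℕ) : ℝ) := by
    rw [Nat.cast_sub hτ]; simp
  have h2 : ((τ : ℕ) : ℝ) = (((τ - 1 : ℕ) + 1 : ℕ) : ℝ) := by
    congr 1; omega
  rw [h1, Real.rpow_natCast, h2, Real.rpow_natCast, Nat.cast_add, Nat.cast_one, Real.Gamma_nat_eq_factorial]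


lemma Sfun_nonneg {τ : ℕ} {lam x : ℝ} (hl : 0 ≤ lam) (hx : 0 ≤ x) : 0 ≤ Sfun τ lam x := by
  apply Finset.sum_nonneg
  intro i _
  positivity

lemma Sfun_zero {τ : ℕ} (hτ : 0 < τ) (lam : ℝ) : Sfun τ lam 0 = 1 := by
  unfold Sfun
  rw [Finset.sum_eq_single 0]
  · simp
  · intro i _ hi; simp [zero_pow hi]
  · intro h; simp at h; omega

lemma Sfun_tendsto (τ : ℕ) {lam : ℝ} (hlam : 0 < lam) :
    Filter.Tendsto (Sfun τ lam) Filter.atTop (nhds 0) := by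
  unfold Sfun
  rw [show (0:ℝ) = ∑ i ∈ Finset.range τ, 0 by simp]
  refine tendsto_finset_sum _ (fun i _ => ?_)
  have h1 : Filter.Tendsto (fun y : ℝ => y ^ i * Real.exp (-y)) Filter.atTop (nhds 0) :=
    tendsto_pow_mul_exp_neg_atTop_nhds_zero i
  have h2 : Filter.Tendsto (fun x : ℝ => lam * x) Filter.atTop Filter.atTop :=
    Filter.Tendsto.const_mul_atTop hlam Filter.tendsto_id
  have h3 := h1.comp h2
  have : (fun x : ℝ => Real.exp (-(lam * x)) * (lam * x) ^ i / i.factorial)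
      = fun x => ((fun y : ℝ => y ^ i * Real.exp (-y)) ∘ (fun x => lam * x)) x / i.factorial := by
    funext x; simp [Function.comp, mul_comm]
  rw [this]
  simpa using h3.div_const (i.factorial : ℝ)

lemma Sfun_integral_pow {τ : ℕ} (hτ : 0 < τ) {lam : ℝ} (hlam : 0 < lam) (NS : ℕ) (hNS : 0 < NS)
    {t : ℝ} (ht : 0 ≤ t) :
    (∫ x in Set.Ioi t, (NS : ℝ) * gammaPDFReal (τ:ℝ) lam x * Sfun τ lam x ^ (NS - 1))
        = Sfun τ lam t ^ NS ∧
      IntegrableOn (fun x => (NS : ℝ) * gammaPDFReal (τ:ℝ) lam x * Sfun τ lam x ^ (NS - 1))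
        (Set.Ioi t) := by
  have hτpos : (0:ℝ) < (τ:ℝ) := by exact_mod_cast hτ
  have hS := fun x => Sfun_hasDerivAt τ hτ lam x
  have hderiv : ∀ x ∈ Set.Ioi t, HasDerivAt (fun y => -(Sfun τ lam y ^ NS))
      ((NS : ℝ) * gammaPDFReal (τ:ℝ) lam x * Sfun τ lam x ^ (NS - 1)) x := by
    intro x hx
    have hx0 : (0:ℝ) ≤ x := le_trans ht (le_of_lt hx)
    have h1 := ((hS x).pow NS).neg
    refine h1.congr_deriv ?_
    rw [gammaPDFReal_eq_nat hτ lam hx0]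
    ring
  have hcont : ContinuousWithinAt (fun y => -(Sfun τ lam y ^ NS)) (Set.Ici t) t :=
    (((hS t).continuousAt).pow NS).neg.continuousWithinAt
  have hnonneg : ∀ x ∈ Set.Ioi t, 0 ≤ (NS : ℝ) * gammaPDFReal (τ:ℝ) lam x
      * Sfun τ lam x ^ (NS - 1) := by
    intro x hx
    have hx0 : (0:ℝ) ≤ x := le_trans ht (le_of_lt hx)
    exact mul_nonneg (mul_nonneg (by positivity) (gammaPDFReal_nonneg hτpos hlam x))
      (pow_nonneg (Sfun_nonneg hlam.le hx0) _)
  have htend : Filter.Tendsto (fun y => -(Sfun τ lam y ^ NS)) Filter.atTop (nhds 0) := by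
    have := ((Sfun_tendsto τ hlam).pow NS).neg
    simpa [zero_pow hNS.ne'] using this
  constructor
  · have := integral_Ioi_of_hasDerivAt_of_nonneg hcont hderiv hnonneg htend
    rw [this]; ring
  · exact integrableOn_Ioi_deriv_of_nonneg hcont hderiv hnonneg htend

lemma density_expand {τ NS : ℕ} (hτ : 0 < τ) {lam : ℝ} (hlam : 0 < lam) {x : ℝ} (hx : 0 ≤ x) :
    (NS : ℝ) * gammaPDFReal (τ:ℝ) lam x * Sfun τ lam x ^ (NS - 1)
      = ((NS : ℝ) * lam ^ τ / Real.Gamma τ) *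
          ∑ n ∈ Finset.piAntidiag (Finset.univ : Finset (Fin τ)) (NS - 1),
            ((Nat.multinomial Finset.univ n : ℝ) *
                ∏ p : Fin τ, (lam ^ (p : ℕ) / (Nat.factorial p)) ^ n p) *
              x ^ ((∑ p : Fin τ, n p * (p : ℕ)) + τ - 1) *
              Real.exp (-(lam * ((∑ p : Fin τ, n p : ℕ) + 1) * x)) := by
  have hGamma : Real.Gamma (τ:ℝ) = ((τ - 1).factorial : ℝ) := by
    have h2 : ((τ : ℕ) : ℝ) = (((τ - 1 : ℕ) + 1 : ℕ) : ℝ) := by congr 1; omega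
    rw [h2, Nat.cast_add, Nat.cast_one, Real.Gamma_nat_eq_factorial]
  set E := Real.exp (-(lam * x)) with hE
  have hSfin : Sfun τ lam x = ∑ p : Fin τ, E * (lam * x) ^ (p:ℕ) / (p:ℕ).factorial := by
    rw [Sfun, ← Fin.sum_univ_eq_sum_range (f := fun i => E * (lam * x) ^ i / i.factorial)]
  rw [gammaPDFReal_eq_nat hτ lam hx, hGamma, hSfin,
    Finset.sum_pow_eq_sum_piAntidiag, Finset.mul_sum, Finset.mul_sum]
  refine Finset.sum_congr rfl (fun n hn => ?_)
  have hprod : ∏ p : Fin τ, (E * (lam * x) ^ (p:ℕ) / (p:ℕ).factorial) ^ n p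
      = (∏ p : Fin τ, (lam ^ (p:ℕ) / ((p:ℕ).factorial : ℝ)) ^ n p)
        * x ^ (∑ p : Fin τ, n p * (p:ℕ)) * E ^ (∑ p : Fin τ, n p) := by
    have h1 : ∀ p : Fin τ, (E * (lam * x) ^ (p:ℕ) / (p:ℕ).factorial) ^ n p
        = (lam ^ (p:ℕ) / ((p:ℕ).factorial : ℝ)) ^ n p * x ^ ((p:ℕ) * n p) * E ^ n p := by
      intro p
      rw [show E * (lam * x) ^ (p:ℕ) / (p:ℕ).factorial
          = lam ^ (p:ℕ) / ((p:ℕ).factorial : ℝ) * x ^ (p:ℕ) * E by rw [mul_pow]; ring,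
        mul_pow, mul_pow, ← pow_mul]
    have hBB : (∑ p : Fin τ, (p:ℕ) * n p) = ∑ p : Fin τ, n p * (p:ℕ) :=
      Finset.sum_congr rfl fun p _ => Nat.mul_comm _ _
    rw [Finset.prod_congr rfl (fun p _ => h1 p), Finset.prod_mul_distrib,
      Finset.prod_mul_distrib,
      Finset.prod_pow_eq_pow_sum Finset.univ (fun p : Fin τ => (p:ℕ) * n p) x,
      Finset.prod_pow_eq_pow_sum Finset.univ n E, hBB]
  have hxp : x ^ ((∑ p : Fin τ, n p * (p:ℕ)) + τ - 1)
      = x ^ (∑ p : Fin τ, n p * (p:ℕ)) * x ^ (τ - 1) := by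
    rw [← pow_add]; congr 1; omega
  have hexp : Real.exp (-(lam * (((∑ p : Fin τ, n p : ℕ) : ℝ) + 1) * x))
      = E ^ (∑ p : Fin τ, n p) * E := by
    rw [hE, ← Real.exp_nat_mul, ← Real.exp_add]
    congr 1
    push_cast
    ring
  rw [hprod, hxp, hexp]
  ring

lemma lintegral_Ioi_ofReal {f : ℝ → ℝ} (hnn : ∀ x, 0 ≤ f x)
    (hneg : ∀ x, x < 0 → f x = 0) {I : ℝ → ℝ}
    (hI : ∀ t, 0 ≤ t → IntegrableOn f (Set.Ioi t) ∧ ∫ x in Set.Ioi t, f x = I t) (t : ℝ) :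
    ∫⁻ x in Set.Ioi t, ENNReal.ofReal (f x) = ENNReal.ofReal (I (max t 0)) := by
  have key : ∀ s, 0 ≤ s → ∫⁻ x in Set.Ioi s, ENNReal.ofReal (f x) = ENNReal.ofReal (I s) := by
    intro s hs
    rw [← (hI s hs).2]
    exact (ofReal_integral_eq_lintegral_ofReal (hI s hs).1 (ae_of_all _ hnn)).symm
  rcases le_or_gt 0 t with ht | ht
  · rw [max_eq_left ht]; exact key t ht
  · rw [max_eq_right ht.le]
    have hdisj : Disjoint (Set.Ioo t 0) (Set.Ici 0) := by
      rw [Set.disjoint_left]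
      rintro x ⟨_, hx0⟩ hx0'
      exact absurd hx0' (not_le.mpr hx0)
    rw [← Set.Ioo_union_Ici_eq_Ioi ht, lintegral_union measurableSet_Ici hdisj]
    have h1 : ∫⁻ x in Set.Ioo t 0, ENNReal.ofReal (f x) = 0 := by
      rw [setLIntegral_congr_fun (g := fun _ => 0) measurableSet_Ioo
        (fun x hx => by rw [hneg x hx.2, ENNReal.ofReal_zero])]
      simp
    have h2 : ∫⁻ x in Set.Ici 0, ENNReal.ofReal (f x)
        = ∫⁻ x in Set.Ioi 0, ENNReal.ofReal (f x) := by
      rw [MeasureTheory.restrict_Ioi_eq_restrict_Ici]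
    rw [h1, h2, key 0 le_rfl, zero_add]


/-- The PDF of the minimum of `N_S` i.i.d. `Gamma(τ, λ)` variables (integer shape `τ`),
expanded via the multinomial theorem (TASE scheme). The tuple index `p` of the paper
(running from `1` to `τ`) corresponds to `p : Fin τ` with value `(p : ℕ) = p - 1` below. -/
theorem stmt_8 {Ω : Type*} [MeasurableSpace Ω] (μ : Measure Ω) [IsProbabilityMeasure μ]
    (NS : ℕ) (hNS : 0 < NS) (τ : ℕ) (hτ : 0 < τ) (lam : ℝ) (hlam : 0 < lam)
    (X : Fin NS → Ω → ℝ) (hXm : ∀ i, Measurable (X i))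
    (hiid : iIndepFun X μ)
    (hlaw : ∀ i, Measure.map (X i) μ = volume.withDensity (gammaPDF (τ : ℝ) lam)) :
    Measure.map (fun ω => ⨅ i, X i ω) μ =
      volume.withDensity (fun x => ENNReal.ofReal (if 0 ≤ x then
        ((NS : ℝ) * lam ^ τ / Real.Gamma τ) *
          ∑ n ∈ Finset.piAntidiag (Finset.univ : Finset (Fin τ)) (NS - 1),
            ((Nat.multinomial Finset.univ n : ℝ) *
                ∏ p : Fin τ, (lam ^ (p : ℕ) / (Nat.factorial p)) ^ n p) *
              x ^ ((∑ p : Fin τ, n p * (p : ℕ)) + τ - 1) *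
              Real.exp (-(lam * ((∑ p : Fin τ, n p : ℕ) + 1) * x))
        else 0)) := by
  haveI : Nonempty (Fin NS) := Fin.pos_iff_nonempty.mp hNS
  have hτpos : (0:ℝ) < (τ:ℝ) := by exact_mod_cast hτ
  set f : ℝ → ℝ := fun x => if 0 ≤ x then
      (NS : ℝ) * gammaPDFReal (τ:ℝ) lam x * Sfun τ lam x ^ (NS - 1) else 0 with hf
  -- the target density equals `ofReal ∘ f`
  have hDf : (fun x => ENNReal.ofReal (if 0 ≤ x then
        ((NS : ℝ) * lam ^ τ / Real.Gamma τ) *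
          ∑ n ∈ Finset.piAntidiag (Finset.univ : Finset (Fin τ)) (NS - 1),
            ((Nat.multinomial Finset.univ n : ℝ) *
                ∏ p : Fin τ, (lam ^ (p : ℕ) / (Nat.factorial p)) ^ n p) *
              x ^ ((∑ p : Fin τ, n p * (p : ℕ)) + τ - 1) *
              Real.exp (-(lam * ((∑ p : Fin τ, n p : ℕ) + 1) * x))
        else 0)) = fun x => ENNReal.ofReal (f x) := by
    funext x
    rcases le_or_gt 0 x with hx | hx
    · rw [hf]; simp only [if_pos hx]
      rw [density_expand hτ hlam hx]
    · rw [hf]; simp only [if_neg (not_le.mpr hx)]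
  rw [hDf]
  set ν := volume.withDensity (fun x => ENNReal.ofReal (f x)) with hν
  -- properties of f
  have hfnn : ∀ x, 0 ≤ f x := by
    intro x
    rw [hf]
    dsimp only
    split_ifs with hx
    · exact mul_nonneg (mul_nonneg (by positivity) (gammaPDFReal_nonneg hτpos hlam x))
        (pow_nonneg (Sfun_nonneg hlam.le hx) _)
    · exact le_rfl
  have hfneg : ∀ x, x < 0 → f x = 0 := fun x hx => by rw [hf]; simp [not_le.mpr hx]
  have hfI : ∀ t, 0 ≤ t → IntegrableOn f (Set.Ioi t) ∧
      ∫ x in Set.Ioi t, f x = Sfun τ lam t ^ NS := by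
    intro t ht
    have h := Sfun_integral_pow hτ hlam NS hNS ht
    have hcongr : Set.EqOn (fun x => (NS : ℝ) * gammaPDFReal (τ:ℝ) lam x
        * Sfun τ lam x ^ (NS - 1)) f (Set.Ioi t) := by
      intro x hx
      rw [hf]
      simp only [if_pos (le_trans ht (le_of_lt hx))]
    constructor
    · exact (h.2.congr_fun hcongr measurableSet_Ioi)
    · rw [← h.1]
      exact (setIntegral_congr_fun measurableSet_Ioi hcongr).symm
  -- measure of Ioi under ν
  have hν_Ioi : ∀ t, ν (Set.Ioi t) = ENNReal.ofReal (Sfun τ lam (max t 0) ^ NS) := by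
    intro t
    rw [hν, withDensity_apply _ measurableSet_Ioi]
    exact lintegral_Ioi_ofReal hfnn hfneg
      (I := fun t => Sfun τ lam t ^ NS) hfI t
  -- measure of Ioi under the gamma marginal
  have hpdfI : ∀ t, 0 ≤ t → IntegrableOn (gammaPDFReal (τ:ℝ) lam) (Set.Ioi t) ∧
      ∫ x in Set.Ioi t, gammaPDFReal (τ:ℝ) lam x = Sfun τ lam t := by
    intro t ht
    have h := Sfun_integral_pow hτ hlam 1 one_pos ht
    simp only [Nat.cast_one, one_mul, Nat.sub_self, pow_zero, mul_one, pow_one] at h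
    exact ⟨h.2, h.1⟩
  have hmarg_Ioi : ∀ t, (volume.withDensity (gammaPDF (τ:ℝ) lam)) (Set.Ioi t)
      = ENNReal.ofReal (Sfun τ lam (max t 0)) := by
    intro t
    rw [withDensity_apply _ measurableSet_Ioi]
    have : ∀ x : ℝ, gammaPDF (τ:ℝ) lam x = ENNReal.ofReal (gammaPDFReal (τ:ℝ) lam x) :=
      fun x => rfl
    simp only [this]
    have := lintegral_Ioi_ofReal (f := gammaPDFReal (τ:ℝ) lam)
      (fun x => gammaPDFReal_nonneg hτpos hlam x)
      (fun x hx => by rw [gammaPDFReal, if_neg (not_le.mpr hx)])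
      (I := Sfun τ lam) hpdfI t
    simpa using this
  -- measurability of the min
  have hmin : Measurable (fun ω => ⨅ i, X i ω) := Measurable.iInf hXm
  -- measure of Ioi under the law of the min
  have hmap_Ioi : ∀ t, Measure.map (fun ω => ⨅ i, X i ω) μ (Set.Ioi t)
      = ENNReal.ofReal (Sfun τ lam (max t 0) ^ NS) := by
    intro t
    rw [Measure.map_apply hmin measurableSet_Ioi]
    have hset : (fun ω => ⨅ i, X i ω) ⁻¹' Set.Ioi t = ⋂ i, X i ⁻¹' Set.Ioi t := by
      ext ω
      simp only [Set.mem_preimage, Set.mem_Ioi, Set.mem_iInter]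
      constructor
      · intro h i
        exact lt_of_lt_of_le h (ciInf_le (Set.finite_range _).bddBelow i)
      · intro h
        obtain ⟨i, hi⟩ := exists_eq_ciInf_of_finite (f := fun i => X i ω)
        rw [← hi]
        exact h i
    rw [hset]
    have hindep := hiid.measure_inter_preimage_eq_mul Finset.univ
      (sets := fun _ => Set.Ioi t) (fun i _ => measurableSet_Ioi)
    have huniv : (⋂ i ∈ (Finset.univ : Finset (Fin NS)), X i ⁻¹' Set.Ioi t)
        = ⋂ i, X i ⁻¹' Set.Ioi t := by simp
    rw [← huniv, hindep]
    have hone : ∀ i, μ (X i ⁻¹' Set.Ioi t) = ENNReal.ofReal (Sfun τ lam (max t 0)) := by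
      intro i
      rw [← Measure.map_apply (hXm i) measurableSet_Ioi, hlaw i, hmarg_Ioi t]
    rw [Finset.prod_congr rfl (fun i _ => hone i), Finset.prod_const, Finset.card_univ,
      Fintype.card_fin, ← ENNReal.ofReal_pow (Sfun_nonneg hlam.le (le_max_right t 0))]
  -- ν is a probability measure
  have hν_univ : ν Set.univ = 1 := by
    have hsplit := lintegral_add_compl (fun x => ENNReal.ofReal (f x))
      (measurableSet_Ici (a := (0:ℝ))) (μ := volume)
    have h1 : ∫⁻ x in Set.Ici (0:ℝ), ENNReal.ofReal (f x)
        = ∫⁻ x in Set.Ioi (0:ℝ), ENNReal.ofReal (f x) := by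
      rw [MeasureTheory.restrict_Ioi_eq_restrict_Ici]
    have h2 : ∫⁻ x in (Set.Ici (0:ℝ))ᶜ, ENNReal.ofReal (f x) = 0 := by
      rw [Set.compl_Ici]
      rw [setLIntegral_congr_fun (g := fun _ => 0) measurableSet_Iio
        (fun x hx => by rw [hfneg x hx, ENNReal.ofReal_zero])]
      simp
    have h3 : ν Set.univ = ∫⁻ x, ENNReal.ofReal (f x) := by
      rw [hν, withDensity_apply _ MeasurableSet.univ, Measure.restrict_univ]
    rw [h3, ← hsplit, h1, h2, add_zero]
    have h4 : ∫⁻ x in Set.Ioi (0:ℝ), ENNReal.ofReal (f x) = ν (Set.Ioi 0) := by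
      rw [hν, withDensity_apply _ measurableSet_Ioi]
    rw [h4, hν_Ioi 0, max_self, Sfun_zero hτ, one_pow, ENNReal.ofReal_one]
  haveI hνprob : IsProbabilityMeasure ν := ⟨hν_univ⟩
  haveI hmprob : IsProbabilityMeasure (Measure.map (fun ω => ⨅ i, X i ω) μ) :=
    Measure.isProbabilityMeasure_map hmin.aemeasurable
  -- conclude via Iic extensionality
  refine Measure.ext_of_Iic _ _ (fun a => ?_)
  have hc : Set.Iic a = (Set.Ioi a)ᶜ := by rw [Set.compl_Ioi]
  rw [hc, measure_compl measurableSet_Ioi (measure_ne_top _ _),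
    measure_compl measurableSet_Ioi (measure_ne_top _ _)]
  rw [measure_univ, measure_univ, hmap_Ioi a, hν_Ioi a]
end

section
/- Let h̃ be a real random variable of the form h̃ = ρh + √(1−ρ²)ε with h ≥ 0 almost surely, ε standard normal independent of h, and 0 < ρ < 1. Then Pr{h̃ ≤ 0} > 0; consequently, if the legitimate SNR is γ̃ = γ̄ · (max(h̃,0))^r, the outage probability Pr{γ̃ ≤ γ} is bounded below by the positive constant Pr{h̃ ≤ 0} = 1 − Z₀ uniformly in the average SNR γ̄, so the outage probability does not decay to zero as γ̄ → ∞. -/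
open MeasureTheory ProbabilityTheory Real

/-- Error floor with imprecise CSI (Remark 2): if `h̃ = ρh + √(1-ρ²)ε` with `h ≥ 0` a.s.,
`ε` standard normal independent of `h`, and `0 < ρ < 1`, then `Pr{h̃ ≤ 0} > 0`, and for the
SNR `γ̃ = γ̄ (max(h̃,0))^r` the outage probability `Pr{γ̃ ≤ γ}` is bounded below by
`Pr{h̃ ≤ 0}` uniformly in the average SNR `γ̄ > 0`. -/
theorem stmt_11 {Ω : Type*} [MeasurableSpace Ω] (μ : Measure Ω) [IsProbabilityMeasure μ]
    (h ε : Ω → ℝ) (hhm : Measurable h) (hεm : Measurable ε)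
    (hh : ∀ᵐ ω ∂μ, 0 ≤ h ω)
    (hlawε : Measure.map ε μ = gaussianReal 0 1)
    (hindep : IndepFun h ε μ)
    (ρ : ℝ) (hρ0 : 0 < ρ) (hρ1 : ρ < 1) (r : ℕ) (hr : 0 < r) :
    0 < μ {ω | ρ * h ω + Real.sqrt (1 - ρ ^ 2) * ε ω ≤ 0} ∧
    ∀ γbar γ : ℝ, 0 < γbar → 0 ≤ γ →
      μ {ω | ρ * h ω + Real.sqrt (1 - ρ ^ 2) * ε ω ≤ 0} ≤
        μ {ω | γbar * (max (ρ * h ω + Real.sqrt (1 - ρ ^ 2) * ε ω) 0) ^ r ≤ γ} := by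
  set c : ℝ := Real.sqrt (1 - ρ ^ 2) with hc
  have hc0 : 0 < c := Real.sqrt_pos.mpr (by nlinarith)
  constructor
  · -- find M with μ {h ≤ M} > 0
    have hexM : ∃ M : ℕ, 0 < μ (h ⁻¹' Set.Iic (M : ℝ)) := by
      by_contra hcon
      push_neg at hcon
      simp only [nonpos_iff_eq_zero] at hcon
      have : μ (⋃ n : ℕ, h ⁻¹' Set.Iic (n : ℝ)) = 0 :=
        measure_iUnion_null hcon
      have huniv : (⋃ n : ℕ, h ⁻¹' Set.Iic (n : ℝ)) = Set.univ := by
        ext ω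
        simp only [Set.mem_iUnion, Set.mem_preimage, Set.mem_Iic, Set.mem_univ, iff_true]
        exact exists_nat_ge (h ω)
      rw [huniv, measure_univ] at this
      simp at this
    obtain ⟨M, hM⟩ := hexM
    -- μ {ε ≤ -ρM/c} > 0
    have hεpos : 0 < μ (ε ⁻¹' Set.Iic (-(ρ * M) / c)) := by
      have : μ (ε ⁻¹' Set.Iic (-(ρ * M) / c)) = gaussianReal 0 1 (Set.Iic (-(ρ * M) / c)) := by
        rw [← hlawε, Measure.map_apply hεm measurableSet_Iic]
      rw [this]
      by_contra hcon
      push_neg at hcon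
      have h0 : gaussianReal 0 1 (Set.Iic (-(ρ * M) / c)) = 0 := le_antisymm hcon zero_le
      have := gaussianReal_absolutelyContinuous' 0 (v := 1) one_ne_zero h0
      rw [Real.volume_Iic] at this
      simp at this
    -- intersection has positive measure by independence
    have hinter := hindep.measure_inter_preimage_eq_mul (Set.Iic (M : ℝ))
      (Set.Iic (-(ρ * M) / c)) measurableSet_Iic measurableSet_Iic
    have hpos : 0 < μ (h ⁻¹' Set.Iic (M : ℝ) ∩ ε ⁻¹' Set.Iic (-(ρ * M) / c)) := by
      rw [hinter]
      exact ENNReal.mul_pos hM.ne' hεpos.ne'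
    refine lt_of_lt_of_le hpos (measure_mono ?_)
    rintro ω ⟨h1, h2⟩
    simp only [Set.mem_preimage, Set.mem_Iic] at h1 h2
    simp only [Set.mem_setOf_eq]
    have : c * ε ω ≤ c * (-(ρ * M) / c) := by
      exact mul_le_mul_of_nonneg_left h2 hc0.le
    rw [mul_div_cancel₀ _ hc0.ne'] at this
    nlinarith
  · intro γbar γ hγbar hγ
    refine measure_mono ?_
    intro ω hω
    simp only [Set.mem_setOf_eq] at hω ⊢
    have : max (ρ * h ω + c * ε ω) 0 = 0 := max_eq_right hω
    rw [this, zero_pow hr.ne', mul_zero]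
    exact hγ
end
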